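/- Let n ≥ 1 and r ≥ 1 be integers. Let I^r_n be the number of inversions of the random permutation of [n] obtained by performing r iterated random-to-top shuffles starting from the identity. Let R_1, ..., R_n be independent random variables with R_i uniform on {0, 1, ..., n−i}, and let K^r_n be the number of distinct values among r i.i.d. uniform samples from [n], independent of (R_1,...,R_n). Then I^r_n is equal in distribution to Σ_{i=1}^{K^r_n} R_i. -/

import Mathlib

open MeasureTheory ProbabilityTheory Filter Finset Topology
open scoped NNReal

/-- Move card `c` to the top (position `0`) of the deck `π`
(where `π i` is the card in position `i`). -/
def moveToTop {n : ℕ} (c : Fin n) (π : Equiv.Perm (Fin n)) : Equiv.Perm (Fin n) :=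
  π * ((π⁻¹ c).cycleRange)⁻¹

/-- The permutation (position `i` ↦ card in position `i`) obtained after performing
iterated random-to-top moves with selected cards `s 0, s 1, …`, starting from the
identity deck `(1, 2, …, n)`. -/
def rttPerm (n r : ℕ) (s : Fin r → Fin n) : Equiv.Perm (Fin n) :=
  (List.ofFn s).foldl (fun π c => moveToTop c π) 1

/-- Number of fixed points of a permutation. -/
def fixedPointCount {n : ℕ} (π : Equiv.Perm (Fin n)) : ℕ :=
  (Finset.univ.filter fun i => π i = i).card

/-- Number of descents of a permutation. -/
def descentCount {n : ℕ} (π : Equiv.Perm (Fin n)) : ℕ :=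
  (Finset.univ.filter fun p : Fin n × Fin n =>
    (p.1 : ℕ) + 1 = (p.2 : ℕ) ∧ π p.2 < π p.1).card

/-- Number of inversions of a permutation. -/
def inversionCount {n : ℕ} (π : Equiv.Perm (Fin n)) : ℕ :=
  (Finset.univ.filter fun p : Fin n × Fin n => p.1 < p.2 ∧ π p.2 < π p.1).card

/-- The number of distinct values among `s 0, …, s (r-1)` (the occupancy count `K^r_n`). -/
def distinctCount (n r : ℕ) (s : Fin r → Fin n) : ℕ :=
  (Finset.univ.image s).card

/-- Probability of the event `p` under the uniform distribution on the finite type `α`. -/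
noncomputable def unifProb {α : Type*} [Fintype α] (p : α → Prop) : ℝ :=
  (Nat.card {x : α // p x} : ℝ) / (Fintype.card α : ℝ)

/-- Expectation of `f` under the uniform distribution on the finite type `α`. -/
noncomputable def unifExpect {α : Type*} [Fintype α] (f : α → ℝ) : ℝ :=
  (∑ x, f x) / (Fintype.card α : ℝ)

/-- Variance of `f` under the uniform distribution on the finite type `α`. -/
noncomputable def unifVar {α : Type*} [Fintype α] (f : α → ℝ) : ℝ :=
  unifExpect fun x => (f x - unifExpect f) ^ 2

/-- `max_{1 ≤ i ≤ k} π(i)`: the maximum card value (in `{1, …, n}`, i.e. `val + 1`)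
among the first `k` positions of `π`. -/
def maxFirst (n k : ℕ) (π : Equiv.Perm (Fin n)) : ℕ :=
  (Finset.univ.filter fun i : Fin n => (i : ℕ) < k).sup fun i => (π i : ℕ) + 1

/-- The number of fixed points among the first `k` positions of `π`. -/
def fixedFirst (n k : ℕ) (π : Equiv.Perm (Fin n)) : ℕ :=
  (Finset.univ.filter fun i : Fin n => (i : ℕ) < k ∧ π i = i).card


open List

section ListLemmas
variable {α : Type*} [DecidableEq α]

lemma dedup_append_singleton (l : List α) (c : α) :
    (l ++ [c]).dedup = l.dedup.erase c ++ [c] := by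
  induction l with
  | nil => simp
  | cons a t ih =>
    by_cases hac : a = c
    · subst hac
      rw [cons_append, dedup_cons_of_mem (by simp), ih]
      by_cases hat : a ∈ t
      · rw [dedup_cons_of_mem hat]
      · rw [dedup_cons_of_notMem hat, erase_cons_head,
          erase_of_not_mem (fun h => hat (mem_dedup.mp h))]
    · by_cases hat : a ∈ t
      · rw [cons_append, dedup_cons_of_mem (by simp [hat]), ih, dedup_cons_of_mem hat]
      · rw [cons_append, dedup_cons_of_notMem (by simp [hat, hac]), ih,
          dedup_cons_of_notMem hat, erase_cons_tail (by simp [hac]), cons_append]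

lemma reverse_erase_of_nodup (l : List α) (h : l.Nodup) (c : α) :
    (l.erase c).reverse = l.reverse.erase c := by
  rw [h.erase_eq_filter, ((nodup_reverse.mpr h)).erase_eq_filter, ← filter_reverse]

lemma filter_notmem_append (L l : List α) (c : α) (hL : L.Nodup) :
    L.filter (fun x => decide (x ∉ l ++ [c])) = (L.filter (fun x => decide (x ∉ l))).erase c := by
  rw [(hL.filter _).erase_eq_filter, List.filter_filter]
  refine filter_congr (fun x _ => ?_)
  by_cases h1 : x ∈ l <;> by_cases h2 : x = c <;> simp [h1, h2]

end ListLemmas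

section Deck
variable {n : ℕ}

/-- top part of the deck: distinct selected values, most recent first -/
def arrL (l : List (Fin n)) : List (Fin n) := l.dedup.reverse

/-- bottom part: unselected cards in increasing order -/
def restL (l : List (Fin n)) : List (Fin n) :=
  (List.finRange n).filter (fun x => decide (x ∉ l))

def deckL (l : List (Fin n)) : List (Fin n) := arrL l ++ restL l

lemma deckL_append (l : List (Fin n)) (c : Fin n) :
    deckL (l ++ [c]) = c :: (deckL l).erase c := by
  unfold deckL arrL restL
  rw [dedup_append_singleton, reverse_append, reverse_singleton, singleton_append,
    filter_notmem_append _ _ _ (nodup_finRange n), erase_append]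
  by_cases hc : c ∈ l.dedup.reverse
  · rw [if_pos hc, reverse_erase_of_nodup _ (nodup_dedup l),
      erase_of_not_mem (a := c) (l := (List.finRange n).filter (fun x => decide (x ∉ l)))
        (by simp only [mem_filter, decide_eq_true_eq]; rintro ⟨-, h⟩
            exact h (mem_dedup.mp (mem_reverse.mp hc))), cons_append]
  · rw [if_neg hc, erase_of_not_mem (a := c) (l := l.dedup)
        (fun h => hc (mem_reverse.mpr h)), cons_append]
end Deck
open List

section MTT
variable {n : ℕ}

lemma ofFn_moveToTop (c : Fin (n+1)) (π : Equiv.Perm (Fin (n+1))) :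
    List.ofFn ⇑(moveToTop c π) = c :: (List.ofFn ⇑π).erase c := by
  have hmem : c ∈ List.ofFn ⇑π := by
    rw [List.mem_ofFn]
    exact ⟨π⁻¹ c, by simp⟩
  have hnd : (List.ofFn ⇑π).Nodup := List.nodup_ofFn.mpr π.injective
  set j : Fin (n+1) := π⁻¹ c with hj
  have hidx : List.idxOf c (List.ofFn ⇑π) = (j : ℕ) := by
    have hlt : List.idxOf c (List.ofFn ⇑π) < (List.ofFn ⇑π).length :=
      List.idxOf_lt_length_iff.mpr hmem
    have h1 : (List.ofFn ⇑π)[List.idxOf c (List.ofFn ⇑π)] = c := List.getElem_idxOf hlt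
    have h2 : (List.ofFn ⇑π)[(j : ℕ)]'(by simpa using j.isLt) = c := by
      rw [List.getElem_ofFn]
      simp [hj]
    exact (List.Nodup.getElem_inj_iff hnd (hi := hlt) (hj := by simpa using j.isLt)).mp (h1.trans h2.symm)
  have herase : (List.ofFn ⇑π).erase c = (List.ofFn ⇑π).eraseIdx (j : ℕ) := by
    exact List.erase_eq_eraseIdx_of_idxOf hidx
  apply List.ext_getElem
  · have hjl : (j:ℕ) < (List.ofFn ⇑π).length := by simpa using j.isLt
    rw [List.length_ofFn, List.length_cons, herase, List.length_eraseIdx, if_pos hjl,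
      List.length_ofFn]
    omega
  · intro i h1 h2
    simp only [List.length_ofFn] at h1
    rw [List.getElem_ofFn]
    cases i with
    | zero =>
      have h0 : ((Fin.cycleRange j)⁻¹ : Equiv.Perm (Fin (n+1))) ⟨0, h1⟩ = j := by
        rw [Equiv.Perm.inv_def, Equiv.symm_apply_eq]
        have : (⟨0, h1⟩ : Fin (n+1)) = 0 := rfl
        rw [this, Fin.cycleRange_self]
      simp only [moveToTop, Equiv.Perm.mul_apply, ← hj]
      rw [show (⟨0, h1⟩ : Fin (n+1)) = 0 from rfl] at h0 ⊢
      rw [h0]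
      simp [hj]
    | succ i' =>
      have h2' : i' < ((List.ofFn ⇑π).eraseIdx (j : ℕ)).length := by
        simp [List.length_eraseIdx, Nat.lt_succ_iff.mp j.isLt]; omega
      simp only [List.getElem_cons_succ, herase, List.getElem_eraseIdx]
      simp only [moveToTop, Equiv.Perm.mul_apply, ← hj]
      by_cases hij : i' < (j : ℕ)
      · rw [dif_pos hij, List.getElem_ofFn]
        congr 1
        rw [Equiv.Perm.inv_def, Equiv.symm_apply_eq]
        have hlt' : (⟨i', by omega⟩ : Fin (n+1)) < j := hij
        rw [Fin.cycleRange_of_lt hlt']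
        apply Fin.ext
        rw [Fin.val_add_one_of_lt]
        exact lt_of_lt_of_le hlt' (Fin.le_last j)
      · rw [dif_neg hij, List.getElem_ofFn]
        congr 1
        rw [Equiv.Perm.inv_def, Equiv.symm_apply_eq]
        exact (Fin.cycleRange_of_gt (Fin.lt_def.mpr (by show (j:ℕ) < i' + 1; omega))).symm

end MTT
open List

section DeckMain
variable {n : ℕ}

lemma ofFn_foldl (l : List (Fin n)) :
    List.ofFn ⇑(l.foldl (fun π c => moveToTop c π) 1) = deckL l := by
  induction l using List.reverseRecOn with
  | nil =>
    simp only [List.foldl_nil, deckL, arrL, restL, List.dedup_nil, List.reverse_nil,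
      List.nil_append]
    rw [← List.ofFn_id]
    simp [List.filter_eq_self]
  | append_singleton l c ih =>
    cases n with
    | zero => exact absurd c.isLt (by omega)
    | succ n => rw [List.foldl_concat, ofFn_moveToTop, ih, deckL_append]

lemma ofFn_rttPerm (r : ℕ) (s : Fin r → Fin n) :
    List.ofFn ⇑(rttPerm n r s) = deckL (List.ofFn s) := ofFn_foldl _

lemma deckL_ofFn_length (r : ℕ) (s : Fin r → Fin n) :
    (deckL (List.ofFn s)).length = n := by
  rw [← ofFn_rttPerm, List.length_ofFn]

lemma rtt_apply (r : ℕ) (s : Fin r → Fin n) (i : Fin n) :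
    rttPerm n r s i = (deckL (List.ofFn s))[(i : ℕ)]'(by rw [deckL_ofFn_length]; exact i.isLt) := by
  have h := List.getElem_ofFn (f := ⇑(rttPerm n r s)) (i := (i : ℕ)) (by simp)
  simp only [ofFn_rttPerm] at h
  rw [h]

lemma distinctCount_eq (r : ℕ) (s : Fin r → Fin n) :
    distinctCount n r s = (List.ofFn s).dedup.length := by
  rw [distinctCount, ← List.card_toFinset]
  congr 1
  ext x
  simp [List.mem_toFinset, List.mem_ofFn, funext_iff, eq_comm]

lemma distinctCount_le (r : ℕ) (s : Fin r → Fin n) : distinctCount n r s ≤ n := by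
  simpa [distinctCount] using Finset.card_le_card (Finset.image s Finset.univ).subset_univ
    |>.trans (by simp)

/-- positions in the top part -/
lemma rtt_apply_lt (r : ℕ) (s : Fin r → Fin n) (i : Fin n)
    (h : (i : ℕ) < distinctCount n r s) :
    rttPerm n r s i = (arrL (List.ofFn s))[(i : ℕ)]'
      (by rw [arrL, List.length_reverse, ← distinctCount_eq]; exact h) := by
  rw [rtt_apply]
  unfold deckL
  exact List.getElem_append_left _

/-- the bottom part is increasing -/
lemma rtt_tail_mono (r : ℕ) (s : Fin r → Fin n) (i j : Fin n)
    (hk : distinctCount n r s ≤ (i : ℕ)) (hij : i < j) :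
    rttPerm n r s i < rttPerm n r s j := by
  have hkj : distinctCount n r s ≤ (j : ℕ) := le_trans hk (le_of_lt hij)
  have hklen : (arrL (List.ofFn s)).length = distinctCount n r s := by
    rw [arrL, List.length_reverse, ← distinctCount_eq]
  have hsorted : List.Pairwise (· < ·) (restL (List.ofFn s)) :=
    List.Pairwise.filter _ (List.pairwise_lt_finRange n)
  have hlen : (deckL (List.ofFn s)).length = n := deckL_ofFn_length r s
  have hrlen : (arrL (List.ofFn s)).length + (restL (List.ofFn s)).length = n := by
    rw [← List.length_append]; exact hlen
  rw [rtt_apply, rtt_apply]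
  unfold deckL
  rw [List.getElem_append_right (by omega), List.getElem_append_right (by omega)]
  have := (List.sortedLT_iff_pairwise.mpr hsorted).strictMono_get
    (a := ⟨(i:ℕ) - (arrL (List.ofFn s)).length, by omega⟩)
    (b := ⟨(j:ℕ) - (arrL (List.ofFn s)).length, by have := hij; omega⟩)
    (by simp only [Fin.mk_lt_mk]; have : (i:ℕ) < (j:ℕ) := hij; omega)
  simpa [List.get_eq_getElem] using this

end DeckMain

section Lcode
variable {n k : ℕ}

/-- partial Lehmer code -/
def lcode (a : Fin k → Fin n) (i : Fin k) : ℕ :=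
  (a i : ℕ) - (Finset.univ.filter fun i' => i' < i ∧ a i' < a i).card

lemma card_filter_lt_fin (a : Fin n) :
    (Finset.univ.filter fun j : Fin n => j < a).card = (a : ℕ) := by
  rw [show (Finset.univ.filter fun j : Fin n => j < a) = Finset.Iio a by ext; simp]
  exact Fin.card_Iio a

lemma card_filter_gt_fin (a : Fin n) :
    (Finset.univ.filter fun j : Fin n => a < j).card = n - 1 - (a : ℕ) := by
  rw [show (Finset.univ.filter fun j : Fin n => a < j) = Finset.Ioi a by ext; simp]
  exact Fin.card_Ioi a

lemma lcode_prev_card_le (a : Fin k → Fin n) (ha : Function.Injective a) (i : Fin k) :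
    (Finset.univ.filter fun i' => i' < i ∧ a i' < a i).card ≤ (a i : ℕ) := by
  rw [← card_filter_lt_fin (a i)]
  apply Finset.card_le_card_of_injOn a
  · intro x hx
    simp only [Finset.mem_coe, Finset.mem_filter, Finset.mem_univ, true_and] at hx ⊢
    exact hx.2
  · exact ha.injOn

lemma lcode_lt (a : Fin k → Fin n) (ha : Function.Injective a) (i : Fin k) :
    lcode a i < n - (i : ℕ) := by
  classical
  set S := Finset.univ.filter fun i' => i' < i ∧ a i' < a i with hS
  set T := Finset.univ.filter fun i' => i' < i ∧ a i < a i' with hT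
  have hST : S.card + T.card = (i : ℕ) := by
    rw [← Finset.card_union_of_disjoint]
    · rw [show S ∪ T = Finset.univ.filter fun i' => i' < i by
        ext x
        simp only [hS, hT, Finset.mem_union, Finset.mem_filter, Finset.mem_univ, true_and]
        constructor
        · rintro (⟨h, -⟩ | ⟨h, -⟩) <;> exact h
        · intro h
          rcases lt_trichotomy (a x) (a i) with h' | h' | h'
          · exact Or.inl ⟨h, h'⟩
          · exact absurd (ha h') (by intro he; subst he; exact lt_irrefl _ h)
          · exact Or.inr ⟨h, h'⟩]
      rw [show (Finset.univ.filter fun i' : Fin k => i' < i) = Finset.Iio i by ext; simp]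
      exact Fin.card_Iio i
    · rw [Finset.disjoint_left]
      intro x hxS hxT
      simp only [hS, hT, Finset.mem_filter, Finset.mem_univ, true_and] at hxS hxT
      exact absurd (lt_trans hxS.2 hxT.2) (lt_irrefl _)
  have hTle : T.card ≤ n - 1 - (a i : ℕ) := by
    rw [← card_filter_gt_fin (a i)]
    apply Finset.card_le_card_of_injOn a
    · intro x hx
      simp only [hT, Finset.mem_coe, Finset.mem_filter, Finset.mem_univ, true_and] at hx ⊢
      exact hx.2
    · exact ha.injOn
  have hSle : S.card ≤ (a i : ℕ) := lcode_prev_card_le a ha i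
  have hai : (a i : ℕ) ≤ n - 1 := by have := (a i).isLt; omega
  have hin : (0:ℕ) < n := lt_of_le_of_lt (Nat.zero_le _) (a i).isLt
  have hgoal : lcode a i = (a i : ℕ) - S.card := rfl
  rw [hgoal]
  omega

end Lcode
open List

section Lcode2
variable {n k : ℕ}

lemma lcode_perm_eq (π : Equiv.Perm (Fin n)) (i : Fin n) :
    lcode ⇑π i = (Finset.univ.filter fun j => i < j ∧ π j < π i).card := by
  classical
  have hval : (π i : ℕ) = (Finset.univ.filter fun j : Fin n => π j < π i).card := by
    rw [← card_filter_lt_fin (π i)]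
    apply Finset.card_nbij ⇑π⁻¹
    · intro x hx
      simp only [Finset.mem_coe, Finset.mem_filter, Finset.mem_univ, true_and] at hx ⊢
      simpa using hx
    · exact (Equiv.injective _).injOn
    · intro j hj
      simp only [Finset.coe_filter, Finset.mem_univ, true_and, Set.mem_setOf_eq] at hj
      exact ⟨π j, by simp [hj], by simp⟩
  have hsplit : (Finset.univ.filter fun j : Fin n => π j < π i) =
      (Finset.univ.filter fun j => j < i ∧ π j < π i) ∪
      (Finset.univ.filter fun j => i < j ∧ π j < π i) := by
    ext x
    simp only [Finset.mem_filter, Finset.mem_univ, true_and, Finset.mem_union]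
    constructor
    · intro hx
      rcases lt_trichotomy x i with h | h | h
      · exact Or.inl ⟨h, hx⟩
      · subst h; exact absurd hx (lt_irrefl _)
      · exact Or.inr ⟨h, hx⟩
    · rintro (⟨-, h⟩ | ⟨-, h⟩) <;> exact h
  have hdisj : Disjoint (Finset.univ.filter fun j : Fin n => j < i ∧ π j < π i)
      (Finset.univ.filter fun j : Fin n => i < j ∧ π j < π i) := by
    rw [Finset.disjoint_left]
    intro x hx1 hx2
    simp only [Finset.mem_filter, Finset.mem_univ, true_and] at hx1 hx2
    exact absurd (lt_trans hx1.1 hx2.1) (lt_irrefl _)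
  have hcard : (Finset.univ.filter fun j : Fin n => π j < π i).card =
      (Finset.univ.filter fun j : Fin n => j < i ∧ π j < π i).card +
      (Finset.univ.filter fun j : Fin n => i < j ∧ π j < π i).card := by
    rw [hsplit, Finset.card_union_of_disjoint hdisj]
  have hdef : lcode ⇑π i = (π i : ℕ) -
      (Finset.univ.filter fun j : Fin n => j < i ∧ π j < π i).card := rfl
  omega

lemma lcode_rtt_tail {r : ℕ} (s : Fin r → Fin n) (i : Fin n)
    (h : distinctCount n r s ≤ (i : ℕ)) : lcode ⇑(rttPerm n r s) i = 0 := by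
  rw [lcode_perm_eq, Finset.card_eq_zero, Finset.filter_eq_empty_iff]
  rintro j - ⟨hij, hlt⟩
  exact absurd hlt (not_lt.mpr (le_of_lt (rtt_tail_mono r s i j h hij)))

lemma inversionCount_eq_sum (π : Equiv.Perm (Fin n)) :
    inversionCount π = ∑ i : Fin n, (Finset.univ.filter fun j => i < j ∧ π j < π i).card := by
  classical
  rw [inversionCount, Finset.card_filter, Fintype.sum_prod_type]
  exact Finset.sum_congr rfl fun i _ => (Finset.card_filter _ _).symm

lemma inv_rtt_eq {r : ℕ} (s : Fin r → Fin n) :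
    inversionCount (rttPerm n r s) =
      ∑ i ∈ Finset.univ.filter (fun i : Fin n => (i : ℕ) < distinctCount n r s),
        lcode ⇑(rttPerm n r s) i := by
  classical
  rw [inversionCount_eq_sum]
  have h1 : ∑ i : Fin n, (Finset.univ.filter fun j => i < j ∧
      rttPerm n r s j < rttPerm n r s i).card = ∑ i : Fin n, lcode ⇑(rttPerm n r s) i :=
    Finset.sum_congr rfl fun i _ => (lcode_perm_eq _ i).symm
  rw [h1, ← Finset.sum_filter_add_sum_filter_not Finset.univ
    (fun i : Fin n => (i : ℕ) < distinctCount n r s)]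
  have h2 : ∑ i ∈ Finset.univ.filter (fun i : Fin n => ¬ (i : ℕ) < distinctCount n r s),
      lcode ⇑(rttPerm n r s) i = 0 := by
    apply Finset.sum_eq_zero
    intro i hi
    simp only [Finset.mem_filter, Finset.mem_univ, true_and, not_lt] at hi
    exact lcode_rtt_tail s i hi
  rw [h2, add_zero]

lemma lcode_trunc (f : Fin n → Fin n) (hk : k ≤ n) (i : Fin k) :
    lcode (fun j : Fin k => f (Fin.castLE hk j)) i = lcode f (Fin.castLE hk i) := by
  classical
  have hcard : (Finset.univ.filter fun i' : Fin k => i' < i ∧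
        f (Fin.castLE hk i') < f (Fin.castLE hk i)).card =
      (Finset.univ.filter fun i' : Fin n => i' < Fin.castLE hk i ∧
        f i' < f (Fin.castLE hk i)).card := by
    apply Finset.card_nbij (Fin.castLE hk)
    · intro x hx
      simp only [Finset.mem_coe, Finset.mem_filter, Finset.mem_univ, true_and] at hx ⊢
      exact ⟨hx.1, hx.2⟩
    · exact (Fin.castLE_injective hk).injOn
    · intro j hj
      simp only [Finset.coe_filter, Finset.mem_univ, true_and, Set.mem_setOf_eq] at hj
      have hjk : (j : ℕ) < k := by
        have h1 : (j : ℕ) < (i : ℕ) := hj.1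
        have := i.isLt
        omega
      exact ⟨⟨(j : ℕ), hjk⟩, by simp only [Finset.coe_filter, Finset.mem_univ, true_and, Set.mem_setOf_eq]; exact ⟨hj.1, hj.2⟩, by apply Fin.ext; simp⟩
  unfold lcode
  rw [hcard]

end Lcode2
open List

section Equivar
variable {n k : ℕ}

lemma distinctCount_comp (σ : Equiv.Perm (Fin n)) {r : ℕ} (s : Fin r → Fin n) :
    distinctCount n r (⇑σ ∘ s) = distinctCount n r s := by
  rw [distinctCount_eq, distinctCount_eq, ← List.map_ofFn,
    List.dedup_map_of_injective σ.injective, List.length_map]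

lemma rtt_comp_apply (σ : Equiv.Perm (Fin n)) {r : ℕ} (s : Fin r → Fin n) (i : Fin n)
    (h : (i : ℕ) < distinctCount n r s) :
    rttPerm n r (⇑σ ∘ s) i = σ (rttPerm n r s i) := by
  have h' : (i : ℕ) < distinctCount n r (⇑σ ∘ s) := by rw [distinctCount_comp]; exact h
  rw [rtt_apply_lt _ _ _ h', rtt_apply_lt _ _ _ h]
  have harr : arrL (List.ofFn (⇑σ ∘ s)) = List.map ⇑σ (arrL (List.ofFn s)) := by
    rw [arrL, arrL, ← List.map_ofFn, List.dedup_map_of_injective σ.injective,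
      ← List.map_reverse]
  simp only [harr, List.getElem_map]

lemma prefix_card_le (a : Fin k → Fin n) (ha : Function.Injective a) (i : Fin k) (v : Fin n) :
    (Finset.univ.filter fun i' => i' < i ∧ a i' < v).card ≤ (v : ℕ) := by
  rw [← card_filter_lt_fin v]
  apply Finset.card_le_card_of_injOn a
  · intro x hx
    simp only [Finset.mem_coe, Finset.mem_filter, Finset.mem_univ, true_and] at hx ⊢
    exact hx.2
  · exact ha.injOn

lemma lcode_injective {a b : Fin k → Fin n} (ha : Function.Injective a)
    (hb : Function.Injective b) (h : ∀ i, lcode a i = lcode b i) : a = b := by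
  classical
  suffices H : ∀ N (i : Fin k), (i : ℕ) < N → a i = b i by
    funext i; exact H ((i : ℕ) + 1) i (Nat.lt_succ_self _)
  intro N
  induction N with
  | zero => exact fun i hi => absurd hi (Nat.not_lt_zero _)
  | succ N IH =>
    intro i hi
    by_cases hiN : (i : ℕ) < N
    · exact IH i hiN
    have hprev : ∀ i' : Fin k, i' < i → a i' = b i' := by
      intro i' h'
      refine IH i' ?_
      have : (i' : ℕ) < (i : ℕ) := h'
      omega
    have hfb : ∀ v : Fin n, (Finset.univ.filter fun i' => i' < i ∧ b i' < v) =
        (Finset.univ.filter fun i' => i' < i ∧ a i' < v) := by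
      intro v
      apply Finset.filter_congr
      intro i' _
      by_cases h' : i' < i
      · simp [h', hprev i' h']
      · simp [h']
    have key : ∀ v w : Fin n, (∀ i' : Fin k, i' < i → a i' ≠ v) → v < w →
        (v : ℕ) - (Finset.univ.filter fun i' => i' < i ∧ a i' < v).card <
        (w : ℕ) - (Finset.univ.filter fun i' => i' < i ∧ a i' < w).card := by
      intro v w hv hvw
      have h1 : (Finset.univ.filter fun i' => i' < i ∧ a i' < v).card ≤ (v : ℕ) :=
        prefix_card_le a ha i v
      have h2 : (Finset.univ.filter fun i' => i' < i ∧ a i' < w).card ≤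
          (Finset.univ.filter fun i' => i' < i ∧ a i' < v).card + ((w : ℕ) - (v : ℕ) - 1) := by
        have hsub : (Finset.univ.filter fun i' => i' < i ∧ a i' < w) ⊆
            (Finset.univ.filter fun i' => i' < i ∧ a i' < v) ∪
            (Finset.univ.filter fun i' => i' < i ∧ v < a i' ∧ a i' < w) := by
          intro x hx
          simp only [Finset.mem_filter, Finset.mem_univ, true_and, Finset.mem_union] at hx ⊢
          rcases lt_trichotomy (a x) v with h' | h' | h'
          · exact Or.inl ⟨hx.1, h'⟩
          · exact absurd h' (hv x hx.1)
          · exact Or.inr ⟨hx.1, h', hx.2⟩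
        have hIoo : (Finset.univ.filter fun i' => i' < i ∧ v < a i' ∧ a i' < w).card ≤
            ((w : ℕ) - (v : ℕ) - 1) := by
          rw [← Nat.card_Ioo (v : ℕ) (w : ℕ)]
          apply Finset.card_le_card_of_injOn (fun i' => ((a i' : ℕ)))
          · intro x hx
            simp only [Finset.mem_coe, Finset.mem_filter, Finset.mem_univ, true_and] at hx
            simp only [Finset.mem_coe, Finset.mem_Ioo]
            exact ⟨hx.2.1, hx.2.2⟩
          · exact (Fin.val_injective.comp ha).injOn
        calc (Finset.univ.filter fun i' => i' < i ∧ a i' < w).card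
            ≤ ((Finset.univ.filter fun i' => i' < i ∧ a i' < v) ∪
              (Finset.univ.filter fun i' => i' < i ∧ v < a i' ∧ a i' < w)).card :=
              Finset.card_le_card hsub
          _ ≤ _ := by
              refine le_trans (Finset.card_union_le _ _) ?_
              exact Nat.add_le_add_left hIoo _
      have hvw' : (v : ℕ) < (w : ℕ) := hvw
      omega
    have hai : ∀ i' : Fin k, i' < i → a i' ≠ a i := by
      intro i' h' he
      exact absurd (ha he) (ne_of_lt h')
    have hbi : ∀ i' : Fin k, i' < i → a i' ≠ b i := by
      intro i' h' he
      rw [hprev i' h'] at he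
      exact absurd (hb he) (ne_of_lt h')
    have hla : lcode a i = (a i : ℕ) -
        (Finset.univ.filter fun i' => i' < i ∧ a i' < a i).card := rfl
    have hlb : lcode b i = (b i : ℕ) -
        (Finset.univ.filter fun i' => i' < i ∧ a i' < b i).card := by
      rw [show lcode b i = (b i : ℕ) -
        (Finset.univ.filter fun i' => i' < i ∧ b i' < b i).card from rfl, hfb]
    rcases lt_trichotomy (a i) (b i) with h' | h' | h'
    · have := key (a i) (b i) hai h'
      rw [← hla, ← hlb] at this
      exact absurd (h i) (ne_of_lt this)
    · exact h'
    · have := key (b i) (a i) hbi h'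
      rw [← hla, ← hlb] at this
      exact absurd (h i) (ne_of_gt this)

lemma lcode_surjective (R : ∀ i : Fin k, Fin (n - (i : ℕ))) :
    ∃ a : Fin k → Fin n, Function.Injective a ∧ ∀ i, lcode a i = ((R i : ℕ)) := by
  classical
  let Θ : {f : Fin k → Fin n // Function.Injective f} → (∀ i : Fin k, Fin (n - (i : ℕ))) :=
    fun f i => ⟨lcode f.1 i, lcode_lt f.1 f.2 i⟩
  have hinj : Function.Injective Θ := by
    intro f g hfg
    apply Subtype.ext
    apply lcode_injective f.2 g.2
    intro i
    simpa [Θ] using congrArg Fin.val (congrFun hfg i)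
  have hcard : Fintype.card {f : Fin k → Fin n // Function.Injective f} =
      Fintype.card (∀ i : Fin k, Fin (n - (i : ℕ))) := by
    rw [Fintype.card_congr (Equiv.subtypeInjectiveEquivEmbedding (Fin k) (Fin n)),
      Fintype.card_embedding_eq, Fintype.card_fin, Fintype.card_fin, Fintype.card_pi]
    simp only [Fintype.card_fin]
    rw [Fin.prod_univ_eq_prod_range (fun i => n - i) k, ← Nat.descFactorial_eq_prod_range]
  have hbij := (Fintype.bijective_iff_injective_and_card Θ).mpr ⟨hinj, hcard⟩
  obtain ⟨⟨a, hainj⟩, hR⟩ := hbij.2 R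
  exact ⟨a, hainj, fun i => by simpa [Θ] using congrArg Fin.val (congrFun hR i)⟩

lemma exists_perm_comp {a b : Fin k → Fin n} (ha : Function.Injective a)
    (hb : Function.Injective b) : ∃ σ : Equiv.Perm (Fin n), ∀ i, σ (a i) = b i := by
  classical
  let e : {x : Fin n // x ∈ Set.range a} ≃ {x : Fin n // x ∈ Set.range b} :=
    (Equiv.ofInjective a ha).symm.trans (Equiv.ofInjective b hb)
  refine ⟨e.extendSubtype, fun i => ?_⟩
  rw [Equiv.extendSubtype_apply_of_mem e (a i) ⟨i, rfl⟩]
  have h1 : (Equiv.ofInjective a ha).symm ⟨a i, ⟨i, rfl⟩⟩ = i := by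
    rw [Equiv.symm_apply_eq]
    rfl
  show ((Equiv.ofInjective b hb) ((Equiv.ofInjective a ha).symm ⟨a i, ⟨i, rfl⟩⟩) : Fin n) = b i
  rw [h1]
  rfl

end Equivar
open List

section Counting
variable (n r k m : ℕ)

/-- sum of the first `k` coordinates -/
def SsumF (R : ∀ i : Fin n, Fin (n - (i : ℕ))) : ℕ :=
  ∑ i ∈ Finset.univ.filter (fun i : Fin n => (i : ℕ) < k), ((R i : ℕ))

/-- number of sequences whose rtt-permutation Lehmer code prefix matches `R` -/
def FkF (R : ∀ i : Fin n, Fin (n - (i : ℕ))) : ℕ :=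
  (Finset.univ.filter fun s : Fin r → Fin n => distinctCount n r s = k ∧
    ∀ i : Fin n, (i : ℕ) < k → (R i : ℕ) = lcode ⇑(rttPerm n r s) i).card

def PgeF : ℕ := ∏ i ∈ Finset.univ.filter (fun i : Fin n => ¬ (i : ℕ) < k), (n - (i : ℕ))

def DF : ℕ := ∏ i : Fin n, (n - (i : ℕ))

def MkF : ℕ :=
  (Finset.univ.filter fun R : ∀ i : Fin n, Fin (n - (i : ℕ)) => SsumF n k R = m).card

def NlkF : ℕ :=
  (Finset.univ.filter fun s : Fin r → Fin n => distinctCount n r s = k ∧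
    inversionCount (rttPerm n r s) = m).card

def TckF : ℕ :=
  (Finset.univ.filter fun s : Fin r → Fin n => distinctCount n r s = k).card

variable {n k}

lemma cnt_lemma (v : Fin n → ℕ) (hv : ∀ i : Fin n, (i : ℕ) < k → v i < n - (i : ℕ)) :
    (Finset.univ.filter fun R : ∀ i : Fin n, Fin (n - (i : ℕ)) =>
      ∀ i : Fin n, (i : ℕ) < k → (R i : ℕ) = v i).card = PgeF n k := by
  classical
  have hset : (Finset.univ.filter fun R : ∀ i : Fin n, Fin (n - (i : ℕ)) =>
      ∀ i : Fin n, (i : ℕ) < k → (R i : ℕ) = v i) =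
      Fintype.piFinset (fun i : Fin n =>
        if h : (i : ℕ) < k then {(⟨v i, hv i h⟩ : Fin (n - (i : ℕ)))} else Finset.univ) := by
    ext R
    simp only [Finset.mem_filter, Finset.mem_univ, true_and, Fintype.mem_piFinset]
    constructor
    · intro hR i
      by_cases h : (i : ℕ) < k
      · rw [dif_pos h, Finset.mem_singleton]
        exact Fin.ext (hR i h)
      · rw [dif_neg h]; exact Finset.mem_univ _
    · intro hR i h
      have := hR i
      rw [dif_pos h, Finset.mem_singleton] at this
      rw [this]
  rw [hset, Fintype.card_piFinset]
  have hprod : ∀ i : Fin n, (if h : (i : ℕ) < k then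
      ({(⟨v i, hv i h⟩ : Fin (n - (i : ℕ)))} : Finset _) else Finset.univ).card =
      if (i : ℕ) < k then 1 else (n - (i : ℕ)) := by
    intro i
    by_cases h : (i : ℕ) < k
    · rw [dif_pos h, if_pos h, Finset.card_singleton]
    · rw [dif_neg h, if_neg h, Finset.card_univ, Fintype.card_fin]
  rw [Finset.prod_congr rfl (fun i _ => hprod i),
    ← Finset.prod_filter_mul_prod_filter_not Finset.univ (fun i : Fin n => (i : ℕ) < k)]
  have h1 : ∏ i ∈ Finset.univ.filter (fun i : Fin n => (i : ℕ) < k),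
      (if (i : ℕ) < k then 1 else (n - (i : ℕ))) = 1 := by
    apply Finset.prod_eq_one
    intro i hi
    simp only [Finset.mem_filter, Finset.mem_univ, true_and] at hi
    rw [if_pos hi]
  have h2 : ∏ i ∈ Finset.univ.filter (fun i : Fin n => ¬ (i : ℕ) < k),
      (if (i : ℕ) < k then 1 else (n - (i : ℕ))) = PgeF n k := by
    apply Finset.prod_congr rfl
    intro i hi
    simp only [Finset.mem_filter, Finset.mem_univ, true_and] at hi
    rw [if_neg hi]
  rw [h1, h2, one_mul]

variable {r m}

lemma match_count (s : Fin r → Fin n) :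
    (Finset.univ.filter fun R : ∀ i : Fin n, Fin (n - (i : ℕ)) =>
      ∀ i : Fin n, (i : ℕ) < k → (R i : ℕ) = lcode ⇑(rttPerm n r s) i).card = PgeF n k :=
  cnt_lemma _ (fun i _ => lcode_lt ⇑(rttPerm n r s) (rttPerm n r s).injective i)

/-- if the code prefix matches, the partial sum equals the inversion count -/
lemma match_sum (s : Fin r → Fin n) (hs : distinctCount n r s = k)
    (R : ∀ i : Fin n, Fin (n - (i : ℕ)))
    (hm : ∀ i : Fin n, (i : ℕ) < k → (R i : ℕ) = lcode ⇑(rttPerm n r s) i) :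
    SsumF n k R = inversionCount (rttPerm n r s) := by
  rw [inv_rtt_eq, hs, SsumF]
  apply Finset.sum_congr rfl
  intro i hi
  simp only [Finset.mem_filter, Finset.mem_univ, true_and] at hi
  exact hm i hi

lemma inner_card (s : Fin r → Fin n) (q : (∀ i : Fin n, Fin (n - (i : ℕ))) → Prop)
    [DecidablePred q] :
    ∑ R ∈ Finset.univ.filter q, (if (distinctCount n r s = k ∧
        ∀ i : Fin n, (i : ℕ) < k → (R i : ℕ) = lcode ⇑(rttPerm n r s) i) then 1 else 0) =
    (Finset.univ.filter fun R : ∀ i : Fin n, Fin (n - (i : ℕ)) =>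
      q R ∧ distinctCount n r s = k ∧
        ∀ i : Fin n, (i : ℕ) < k → (R i : ℕ) = lcode ⇑(rttPerm n r s) i).card := by
  classical
  rw [Finset.sum_filter, Finset.card_filter]
  apply Finset.sum_congr rfl
  intro R _
  by_cases h1 : q R <;> by_cases h2 : (distinctCount n r s = k ∧
      ∀ i : Fin n, (i : ℕ) < k → (R i : ℕ) = lcode ⇑(rttPerm n r s) i) <;>
    simp [h1, h2]

lemma swap_lemma (q : (∀ i : Fin n, Fin (n - (i : ℕ))) → Prop) [DecidablePred q] :
    ∑ R ∈ Finset.univ.filter q, FkF n r k R =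
    ∑ s : Fin r → Fin n, (Finset.univ.filter
      fun R : ∀ i : Fin n, Fin (n - (i : ℕ)) => q R ∧ distinctCount n r s = k ∧
        ∀ i : Fin n, (i : ℕ) < k → (R i : ℕ) = lcode ⇑(rttPerm n r s) i).card := by
  classical
  have h1 : ∀ R, FkF n r k R = ∑ s : Fin r → Fin n, (if (distinctCount n r s = k ∧
      ∀ i : Fin n, (i : ℕ) < k → (R i : ℕ) = lcode ⇑(rttPerm n r s) i) then 1 else 0) := by
    intro R
    rw [FkF, Finset.card_filter]
  rw [Finset.sum_congr rfl fun R _ => h1 R, Finset.sum_comm]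
  exact Finset.sum_congr rfl fun s _ => inner_card s q

lemma per_s_card_A (s : Fin r → Fin n) :
    (Finset.univ.filter fun R : ∀ i : Fin n, Fin (n - (i : ℕ)) =>
      SsumF n k R = m ∧ distinctCount n r s = k ∧
        ∀ i : Fin n, (i : ℕ) < k → (R i : ℕ) = lcode ⇑(rttPerm n r s) i).card =
    if (distinctCount n r s = k ∧ inversionCount (rttPerm n r s) = m)
      then PgeF n k else 0 := by
  classical
  by_cases hKs : distinctCount n r s = k
  · by_cases hinv : inversionCount (rttPerm n r s) = m
    · rw [if_pos ⟨hKs, hinv⟩, ← match_count (k := k) s]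
      congr 1
      ext R
      simp only [Finset.mem_filter, Finset.mem_univ, true_and]
      constructor
      · exact fun h => h.2.2
      · exact fun h => ⟨by rw [match_sum s hKs R h, hinv], hKs, h⟩
    · rw [if_neg (by tauto), Finset.card_eq_zero, Finset.filter_eq_empty_iff]
      rintro R - ⟨hsum, -, hmatch⟩
      exact hinv (by rw [← match_sum s hKs R hmatch, hsum])
  · rw [if_neg (by tauto), Finset.card_eq_zero, Finset.filter_eq_empty_iff]
    rintro R - ⟨-, hKs', -⟩
    exact hKs hKs'

lemma per_s_card_B (s : Fin r → Fin n) :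
    (Finset.univ.filter fun R : ∀ i : Fin n, Fin (n - (i : ℕ)) =>
      distinctCount n r s = k ∧
        ∀ i : Fin n, (i : ℕ) < k → (R i : ℕ) = lcode ⇑(rttPerm n r s) i).card =
    if distinctCount n r s = k then PgeF n k else 0 := by
  classical
  by_cases hKs : distinctCount n r s = k
  · rw [if_pos hKs, ← match_count (k := k) s]
    congr 1
    ext R
    simp only [Finset.mem_filter, Finset.mem_univ, true_and]
    exact ⟨fun h => h.2, fun h => ⟨hKs, h⟩⟩
  · rw [if_neg hKs, Finset.card_eq_zero, Finset.filter_eq_empty_iff]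
    rintro R - ⟨hKs', -⟩
    exact hKs hKs'

lemma sumA : ∑ R ∈ Finset.univ.filter
      (fun R : ∀ i : Fin n, Fin (n - (i : ℕ)) => SsumF n k R = m), FkF n r k R =
    NlkF n r k m * PgeF n k := by
  classical
  rw [swap_lemma]
  rw [Finset.sum_congr rfl fun s _ => per_s_card_A (m := m) s]
  rw [Finset.sum_ite, Finset.sum_const, Finset.sum_const_zero, add_zero, smul_eq_mul, NlkF]

lemma sumB : ∑ R : ∀ i : Fin n, Fin (n - (i : ℕ)), FkF n r k R =
    TckF n r k * PgeF n k := by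
  classical
  have := swap_lemma (n := n) (r := r) (k := k) (q := fun _ => True)
  simp only [Finset.filter_true] at this
  rw [this]
  have h2 : ∀ s : Fin r → Fin n, (Finset.univ.filter
      fun R : ∀ i : Fin n, Fin (n - (i : ℕ)) => True ∧ distinctCount n r s = k ∧
        ∀ i : Fin n, (i : ℕ) < k → (R i : ℕ) = lcode ⇑(rttPerm n r s) i).card =
      if distinctCount n r s = k then PgeF n k else 0 := by
    intro s
    rw [← per_s_card_B s]
    congr 1
    ext R
    simp
  rw [Finset.sum_congr rfl fun s _ => h2 s, Finset.sum_ite, Finset.sum_const,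
    Finset.sum_const_zero, add_zero, smul_eq_mul, TckF]

end Counting
open List

section Constancy
variable {n r k m : ℕ}

lemma match_iff_afun (hk : k ≤ n) (R : ∀ i : Fin n, Fin (n - (i : ℕ)))
    (a : Fin k → Fin n) (ha : Function.Injective a)
    (hca : ∀ i : Fin k, lcode a i = (R (Fin.castLE hk i) : ℕ))
    (s : Fin r → Fin n) (hs : distinctCount n r s = k) :
    (∀ i : Fin n, (i : ℕ) < k → (R i : ℕ) = lcode ⇑(rttPerm n r s) i) ↔
    (∀ i : Fin k, rttPerm n r s (Fin.castLE hk i) = a i) := by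
  set π := rttPerm n r s with hπ
  set b : Fin k → Fin n := fun i => π (Fin.castLE hk i) with hb
  have hbinj : Function.Injective b := fun x y hxy =>
    Fin.castLE_injective hk (π.injective hxy)
  have hlb : ∀ i : Fin k, lcode b i = lcode ⇑π (Fin.castLE hk i) := fun i =>
    lcode_trunc ⇑π hk i
  constructor
  · intro hm
    have hba : b = a := by
      apply lcode_injective hbinj ha
      intro i
      rw [hlb i, hca i, ← hm (Fin.castLE hk i) (by simpa using i.isLt)]
    exact fun i => congrFun hba i
  · intro hA i hik
    have hieq : Fin.castLE hk ⟨(i : ℕ), hik⟩ = i := Fin.ext rfl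
    have hba : b = a := funext hA
    rw [← hieq, ← hlb ⟨(i : ℕ), hik⟩, hba, hca ⟨(i : ℕ), hik⟩, hieq]

lemma FkF_const (hk : k ≤ n) (R R' : ∀ i : Fin n, Fin (n - (i : ℕ))) :
    FkF n r k R = FkF n r k R' := by
  classical
  have hmk : ∀ (Q : ∀ i : Fin n, Fin (n - (i : ℕ))) (i : Fin k),
      (Q (Fin.castLE hk i) : ℕ) < n - (i : ℕ) := by
    intro Q i
    have := (Q (Fin.castLE hk i)).isLt
    simpa using this
  obtain ⟨a, ha, hca⟩ := lcode_surjective (n := n) (k := k)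
    (fun i => ⟨(R (Fin.castLE hk i) : ℕ), hmk R i⟩)
  obtain ⟨a', ha', hca'⟩ := lcode_surjective (n := n) (k := k)
    (fun i => ⟨(R' (Fin.castLE hk i) : ℕ), hmk R' i⟩)
  have hca2 : ∀ i : Fin k, lcode a i = (R (Fin.castLE hk i) : ℕ) := fun i => hca i
  have hca2' : ∀ i : Fin k, lcode a' i = (R' (Fin.castLE hk i) : ℕ) := fun i => hca' i
  have hfR : (Finset.univ.filter fun s : Fin r → Fin n => distinctCount n r s = k ∧
      ∀ i : Fin n, (i : ℕ) < k → (R i : ℕ) = lcode ⇑(rttPerm n r s) i) =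
      (Finset.univ.filter fun s : Fin r → Fin n => distinctCount n r s = k ∧
      ∀ i : Fin k, rttPerm n r s (Fin.castLE hk i) = a i) := by
    ext s
    simp only [Finset.mem_filter, Finset.mem_univ, true_and]
    constructor
    · rintro ⟨hs, hm⟩
      exact ⟨hs, (match_iff_afun hk R a ha hca2 s hs).mp hm⟩
    · rintro ⟨hs, hm⟩
      exact ⟨hs, (match_iff_afun hk R a ha hca2 s hs).mpr hm⟩
  have hfR' : (Finset.univ.filter fun s : Fin r → Fin n => distinctCount n r s = k ∧
      ∀ i : Fin n, (i : ℕ) < k → (R' i : ℕ) = lcode ⇑(rttPerm n r s) i) =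
      (Finset.univ.filter fun s : Fin r → Fin n => distinctCount n r s = k ∧
      ∀ i : Fin k, rttPerm n r s (Fin.castLE hk i) = a' i) := by
    ext s
    simp only [Finset.mem_filter, Finset.mem_univ, true_and]
    constructor
    · rintro ⟨hs, hm⟩
      exact ⟨hs, (match_iff_afun hk R' a' ha' hca2' s hs).mp hm⟩
    · rintro ⟨hs, hm⟩
      exact ⟨hs, (match_iff_afun hk R' a' ha' hca2' s hs).mpr hm⟩
  rw [FkF, FkF, hfR, hfR']
  obtain ⟨σ, hσ⟩ := exists_perm_comp ha ha'
  apply Finset.card_bij' (fun s _ => ⇑σ ∘ s) (fun s _ => ⇑σ⁻¹ ∘ s)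
  · intro s hs
    simp only [Finset.mem_filter, Finset.mem_univ, true_and] at hs ⊢
    obtain ⟨hs1, hs2⟩ := hs
    refine ⟨by rw [distinctCount_comp]; exact hs1, fun i => ?_⟩
    rw [rtt_comp_apply σ s _ (by rw [hs1]; simpa using i.isLt), hs2 i, hσ i]
  · intro s hs
    simp only [Finset.mem_filter, Finset.mem_univ, true_and] at hs ⊢
    obtain ⟨hs1, hs2⟩ := hs
    refine ⟨by rw [distinctCount_comp]; exact hs1, fun i => ?_⟩
    rw [rtt_comp_apply σ⁻¹ s _ (by rw [hs1]; simpa using i.isLt), hs2 i, ← hσ i]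
    simp
  · intro s _
    funext t
    simp
  · intro s _
    funext t
    simp

lemma per_k (hk : k ≤ n) :
    NlkF n r k m * DF n = TckF n r k * MkF n k m := by
  classical
  have hpos : ∀ i : Fin n, 0 < n - (i : ℕ) := fun i => by have := i.isLt; omega
  set R₀ : ∀ i : Fin n, Fin (n - (i : ℕ)) := fun i => ⟨0, hpos i⟩ with hR₀
  have hconstA : ∑ R ∈ Finset.univ.filter
      (fun R : ∀ i : Fin n, Fin (n - (i : ℕ)) => SsumF n k R = m), FkF n r k R =
      MkF n k m * FkF n r k R₀ := by
    rw [Finset.sum_congr rfl fun R _ => FkF_const (r := r) hk R R₀, Finset.sum_const,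
      smul_eq_mul, MkF]
  have hconstB : ∑ R : ∀ i : Fin n, Fin (n - (i : ℕ)), FkF n r k R =
      DF n * FkF n r k R₀ := by
    rw [Finset.sum_congr rfl fun R _ => FkF_const (r := r) hk R R₀, Finset.sum_const,
      smul_eq_mul, Finset.card_univ, Fintype.card_pi]
    simp only [Fintype.card_fin, DF]
  have hA : NlkF n r k m * PgeF n k = MkF n k m * FkF n r k R₀ := by
    rw [← sumA, hconstA]
  have hB : TckF n r k * PgeF n k = DF n * FkF n r k R₀ := by
    rw [← sumB, hconstB]
  have hPpos : 0 < PgeF n k := Finset.prod_pos fun i _ => hpos i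
  apply Nat.eq_of_mul_eq_mul_right hPpos
  calc NlkF n r k m * DF n * PgeF n k = (NlkF n r k m * PgeF n k) * DF n := by ring
    _ = MkF n k m * FkF n r k R₀ * DF n := by rw [hA]
    _ = (DF n * FkF n r k R₀) * MkF n k m := by ring
    _ = (TckF n r k * PgeF n k) * MkF n k m := by rw [hB]
    _ = TckF n r k * MkF n k m * PgeF n k := by ring

end Constancy
open List

section Assemble
variable {n r m : ℕ}

lemma Nl_split :
    (Finset.univ.filter fun s : Fin r → Fin n =>
      inversionCount (rttPerm n r s) = m).card =
    ∑ k ∈ Finset.range (n + 1), NlkF n r k m := by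
  classical
  rw [Finset.card_filter,
    ← Finset.sum_fiberwise_of_maps_to (g := distinctCount n r) (t := Finset.range (n + 1))
      (fun s _ => Finset.mem_range.mpr (Nat.lt_succ_of_le (distinctCount_le r s)))]
  apply Finset.sum_congr rfl
  intro k _
  rw [NlkF, Finset.card_filter, Finset.sum_filter]
  apply Finset.sum_congr rfl
  intro s _
  by_cases h1 : distinctCount n r s = k <;>
    by_cases h2 : inversionCount (rttPerm n r s) = m <;> simp [h1, h2]

lemma Nr_split :
    ((Finset.univ : Finset ((Fin r → Fin n) × (∀ i : Fin n, Fin (n - (i : ℕ))))).filter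
      fun x => SsumF n (distinctCount n r x.1) x.2 = m).card =
    ∑ k ∈ Finset.range (n + 1), TckF n r k * MkF n k m := by
  classical
  rw [Finset.card_filter, Fintype.sum_prod_type]
  have h1 : ∀ s : Fin r → Fin n,
      (∑ R : ∀ i : Fin n, Fin (n - (i : ℕ)),
        if SsumF n (distinctCount n r s) R = m then 1 else 0) =
      MkF n (distinctCount n r s) m := by
    intro s
    rw [MkF, Finset.card_filter]
  rw [Finset.sum_congr rfl fun s _ => h1 s,
    ← Finset.sum_fiberwise_of_maps_to (g := distinctCount n r) (t := Finset.range (n + 1))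
      (fun s _ => Finset.mem_range.mpr (Nat.lt_succ_of_le (distinctCount_le r s)))]
  apply Finset.sum_congr rfl
  intro k _
  have h2 : ∀ s ∈ Finset.univ.filter (fun s : Fin r → Fin n => distinctCount n r s = k),
      MkF n (distinctCount n r s) m = MkF n k m := by
    intro s hs
    simp only [Finset.mem_filter, Finset.mem_univ, true_and] at hs
    rw [hs]
  rw [Finset.sum_congr rfl h2, Finset.sum_const, smul_eq_mul, TckF]

lemma key_identity :
    (Finset.univ.filter fun s : Fin r → Fin n =>
      inversionCount (rttPerm n r s) = m).card * DF n =
    ((Finset.univ : Finset ((Fin r → Fin n) × (∀ i : Fin n, Fin (n - (i : ℕ))))).filter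
      fun x => SsumF n (distinctCount n r x.1) x.2 = m).card := by
  classical
  rw [Nl_split, Nr_split, Finset.sum_mul]
  apply Finset.sum_congr rfl
  intro k hk
  exact per_k (Nat.lt_succ_iff.mp (Finset.mem_range.mp hk))

end Assemble

theorem rtt_inversions_decomposition' (n r : ℕ) (hn : 1 ≤ n) (hr : 1 ≤ r) (m : ℕ) :
    unifProb (fun s : Fin r → Fin n => inversionCount (rttPerm n r s) = m) =
      unifProb (fun x : (Fin r → Fin n) × (∀ i : Fin n, Fin (n - (i : ℕ))) =>
        (∑ i ∈ Finset.univ.filter fun i : Fin n => (i : ℕ) < distinctCount n r x.1,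
          ((x.2 i : ℕ))) = m) := by
  classical
  rw [unifProb, unifProb, Nat.card_eq_fintype_card, Nat.card_eq_fintype_card,
    Fintype.card_subtype, Fintype.card_subtype]
  have hcard1 : Fintype.card (Fin r → Fin n) = n ^ r := by
    simp [Fintype.card_fun]
  have hcard2 : Fintype.card ((Fin r → Fin n) × (∀ i : Fin n, Fin (n - (i : ℕ)))) =
      n ^ r * DF n := by
    rw [Fintype.card_prod, hcard1, Fintype.card_pi]
    simp [DF]
  rw [hcard1, hcard2]
  have hkey := key_identity (n := n) (r := r) (m := m)
  have hpred : ((Finset.univ : Finset ((Fin r → Fin n) × (∀ i : Fin n, Fin (n - (i : ℕ))))).filter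
      fun x => (∑ i ∈ Finset.univ.filter fun i : Fin n => (i : ℕ) < distinctCount n r x.1,
        ((x.2 i : ℕ))) = m).card =
      ((Finset.univ : Finset ((Fin r → Fin n) × (∀ i : Fin n, Fin (n - (i : ℕ))))).filter
      fun x => SsumF n (distinctCount n r x.1) x.2 = m).card := by
    congr 1
  rw [hpred, ← hkey]
  have hD : (0 : ℝ) < DF n := by
    have : 0 < DF n := Finset.prod_pos fun i _ => by have := i.isLt; omega
    exact_mod_cast this
  have hnr : (0 : ℝ) < (n : ℝ) ^ r := by positivity
  rw [div_eq_div_iff (by positivity) (by push_cast; positivity)]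
  push_cast
  ring

/-- **Theorem (decomposition of inversions).** For `n ≥ 1`, `r ≥ 1`, the number of
inversions after `r` iterated random-to-top shuffles is equal in distribution to
`Σ_{i=1}^{K} R_i`, where the `R_i` are independent uniform on `{0, 1, …, n - i}`
(for `1 ≤ i ≤ n`) and `K` is the (independent) number of distinct values among `r`
i.i.d. uniform samples from `[n]` (here everything is uniform on the finite product). -/
theorem rtt_inversions_decomposition (n r : ℕ) (hn : 1 ≤ n) (hr : 1 ≤ r) (m : ℕ) :
    unifProb (fun s : Fin r → Fin n => inversionCount (rttPerm n r s) = m) =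
      unifProb (fun x : (Fin r → Fin n) × (∀ i : Fin n, Fin (n - (i : ℕ))) =>
        (∑ i ∈ Finset.univ.filter fun i : Fin n => (i : ℕ) < distinctCount n r x.1,
          ((x.2 i : ℕ))) = m) := by
  exact rtt_inversions_decomposition' n r hn hr m
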